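/- For any finite group G and any element g ∈ G, e(G,g) ≤ e(G), with equality if and only if g belongs to the Frattini subgroup of G. -/

import Mathlib

open Subgroup

/-- Probability that `n` uniformly random elements of `G` together with `Y` generate `G`. -/
noncomputable def genProb (G : Type*) [Group G] (Y : Set G) (n : ℕ) : ℝ :=
  (Nat.card {v : Fin n → G // Subgroup.closure (Y ∪ Set.range v) = ⊤} : ℝ) /
    (Nat.card G : ℝ) ^ n

/-- Expected number of uniformly random elements of `G` needed to generate `G` together
with `Y`: `e(G,Y) = ∑_{n ≥ 0} (1 - P_{G,Y}(n))`. -/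
noncomputable def eTime (G : Type*) [Group G] (Y : Set G) : ℝ :=
  ∑' n : ℕ, (1 - genProb G Y n)

/-- The Frattini subgroup: intersection of the maximal subgroups. -/
noncomputable def frattiniSub (G : Type*) [Group G] : Subgroup G :=
  ⨅ M ∈ {M : Subgroup G | IsCoatom M}, M

section Aux

variable {G : Type*} [Group G] [Finite G]

private lemma card_pow_pos (n : ℕ) : (0:ℝ) < (Nat.card G : ℝ) ^ n :=
  pow_pos (by exact_mod_cast Nat.card_pos) n

private lemma good_add_bad (Y : Set G) (n : ℕ) :
    Nat.card {v : Fin n → G // Subgroup.closure (Y ∪ Set.range v) = ⊤}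
      + Nat.card {v : Fin n → G // ¬ (Subgroup.closure (Y ∪ Set.range v) = ⊤)}
      = Nat.card G ^ n := by
  classical
  letI : Fintype G := Fintype.ofFinite G
  simp only [Nat.card_eq_fintype_card]
  have h1 := Fintype.card_subtype_compl
    (fun v : Fin n → G => Subgroup.closure (Y ∪ Set.range v) = ⊤)
  have h2 := Fintype.card_subtype_le
    (fun v : Fin n → G => Subgroup.closure (Y ∪ Set.range v) = ⊤)
  have h3 : Fintype.card (Fin n → G) = Fintype.card G ^ n := by
    simp [Fintype.card_fun]
  omega

private lemma genProb_le_one (Y : Set G) (n : ℕ) : genProb G Y n ≤ 1 := by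
  rw [genProb, div_le_one (card_pow_pos n)]
  have := good_add_bad Y n
  have h : Nat.card {v : Fin n → G // Subgroup.closure (Y ∪ Set.range v) = ⊤}
      ≤ Nat.card G ^ n := by omega
  exact_mod_cast h

private lemma one_sub_genProb (Y : Set G) (n : ℕ) :
    1 - genProb G Y n =
      (Nat.card {v : Fin n → G // ¬ (Subgroup.closure (Y ∪ Set.range v) = ⊤)} : ℝ)
        / (Nat.card G : ℝ) ^ n := by
  have h : ((Nat.card {v : Fin n → G // Subgroup.closure (Y ∪ Set.range v) = ⊤} : ℝ)
      + (Nat.card {v : Fin n → G // ¬ (Subgroup.closure (Y ∪ Set.range v) = ⊤)} : ℝ))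
      = (Nat.card G : ℝ) ^ n := by
    exact_mod_cast congrArg (Nat.cast : ℕ → ℝ) (good_add_bad Y n)
  have hp := card_pow_pos (G := G) n
  rw [genProb]
  field_simp
  linarith

private lemma coatom_card_le {M : Subgroup G} (hM : IsCoatom M) :
    (Nat.card M : ℝ) ≤ (Nat.card G : ℝ) / 2 := by
  have h := Subgroup.index_mul_card M
  have h0 : M.index ≠ 0 := Subgroup.index_ne_zero_of_finite
  have h1 : M.index ≠ 1 := fun hc => hM.1 (Subgroup.index_eq_one.mp hc)
  have h2 : 2 ≤ M.index := by omega
  have h3 : 2 * Nat.card M ≤ Nat.card G := by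
    calc 2 * Nat.card M ≤ M.index * Nat.card M := Nat.mul_le_mul_right _ h2
    _ = Nat.card G := h
  rw [le_div_iff₀ (by norm_num : (0:ℝ) < 2)]
  calc (Nat.card M : ℝ) * 2 = ((2 * Nat.card M : ℕ) : ℝ) := by push_cast; ring
  _ ≤ (Nat.card G : ℝ) := by exact_mod_cast h3

private lemma bad_bound (Y : Set G) (n : ℕ) :
    (Nat.card {v : Fin n → G // ¬ (Subgroup.closure (Y ∪ Set.range v) = ⊤)} : ℝ)
      ≤ (Nat.card {M : Subgroup G // IsCoatom M} : ℝ) * ((Nat.card G : ℝ) / 2) ^ n := by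
  classical
  have hstep : ∀ v : {v : Fin n → G // ¬ (Subgroup.closure (Y ∪ Set.range v) = ⊤)},
      ∃ M : Subgroup G, IsCoatom M ∧ Subgroup.closure (Y ∪ Set.range v.1) ≤ M := fun v =>
    (eq_top_or_exists_le_coatom (Subgroup.closure (Y ∪ Set.range v.1))).resolve_left v.2
  choose Mf hMf hlef using hstep
  set φ : {v : Fin n → G // ¬ (Subgroup.closure (Y ∪ Set.range v) = ⊤)} →
      Σ M : {M : Subgroup G // IsCoatom M}, (Fin n → M.1) :=
    fun v => ⟨⟨Mf v, hMf v⟩, fun i => ⟨v.1 i,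
      hlef v (Subgroup.subset_closure (Set.mem_union_right _ (Set.mem_range_self i)))⟩⟩ with hφ
  have hinj : Function.Injective φ := by
    intro a b hab
    have h := congrArg
      (fun x : Σ M : {M : Subgroup G // IsCoatom M}, (Fin n → M.1) => fun i => ((x.2 i : G))) hab
    exact Subtype.ext (funext fun i => congrFun h i)
  have hcard := Nat.card_le_card_of_injective φ hinj
  have heval : (Nat.card (Σ M : {M : Subgroup G // IsCoatom M}, (Fin n → M.1)) : ℝ)
      ≤ (Nat.card {M : Subgroup G // IsCoatom M} : ℝ) * ((Nat.card G : ℝ) / 2) ^ n := by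
    letI : Fintype G := Fintype.ofFinite G
    letI : Fintype (Subgroup G) := Fintype.ofFinite _
    letI : Fintype {M : Subgroup G // IsCoatom M} := Fintype.ofFinite _
    have hsig : (Nat.card (Σ M : {M : Subgroup G // IsCoatom M}, (Fin n → M.1)) : ℝ)
        = ∑ M : {M : Subgroup G // IsCoatom M}, ((Nat.card M.1 : ℝ)) ^ n := by
      rw [Nat.card_eq_fintype_card, Fintype.card_sigma]
      push_cast
      refine Finset.sum_congr rfl fun M _ => ?_
      rw [← Nat.card_eq_fintype_card, Nat.card_fun]
      push_cast
      simp
    rw [hsig]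
    calc (∑ M : {M : Subgroup G // IsCoatom M}, ((Nat.card M.1 : ℝ)) ^ n)
        ≤ ∑ _M : {M : Subgroup G // IsCoatom M}, ((Nat.card G : ℝ) / 2) ^ n := by
          apply Finset.sum_le_sum
          intro M _
          exact pow_le_pow_left₀ (by positivity) (coatom_card_le M.2) n
      _ = (Nat.card {M : Subgroup G // IsCoatom M} : ℝ) * ((Nat.card G : ℝ) / 2) ^ n := by
          simp [Finset.sum_const, Finset.card_univ, nsmul_eq_mul, Nat.card_eq_fintype_card]
  exact le_trans (by exact_mod_cast hcard) heval

private lemma summable_one_sub (Y : Set G) : Summable (fun n => 1 - genProb G Y n) := by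
  apply Summable.of_nonneg_of_le (fun n => by linarith [genProb_le_one (G := G) Y n])
    (fun n => ?_)
    ((summable_geometric_of_lt_one (by norm_num) (by norm_num : (1/2:ℝ) < 1)).mul_left
      (Nat.card {M : Subgroup G // IsCoatom M} : ℝ))
  rw [one_sub_genProb]
  have hb := bad_bound Y n
  have hp := card_pow_pos (G := G) n
  rw [div_le_iff₀ hp]
  calc (Nat.card {v : Fin n → G // ¬ (Subgroup.closure (Y ∪ Set.range v) = ⊤)} : ℝ)
      ≤ (Nat.card {M : Subgroup G // IsCoatom M} : ℝ) * ((Nat.card G : ℝ) / 2) ^ n := hb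
    _ = (Nat.card {M : Subgroup G // IsCoatom M} : ℝ) * (1/2 : ℝ) ^ n * (Nat.card G : ℝ) ^ n := by
        rw [mul_assoc, ← mul_pow]; congr 2; ring

private lemma count_mono {Y Z : Set G} (h : Y ⊆ Z) (n : ℕ) :
    Nat.card {v : Fin n → G // Subgroup.closure (Y ∪ Set.range v) = ⊤}
      ≤ Nat.card {v : Fin n → G // Subgroup.closure (Z ∪ Set.range v) = ⊤} := by
  apply Nat.card_le_card_of_injective
    (fun v => ⟨v.1, by
      have h2 := Subgroup.closure_mono (Set.union_subset_union_left (Set.range v.1) h)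
      rw [v.2] at h2
      exact top_unique h2⟩)
  intro a b hab
  exact Subtype.ext
    (congrArg (fun x : {v : Fin n → G // Subgroup.closure (Z ∪ Set.range v) = ⊤} => x.1) hab)

private lemma genProb_mono {Y Z : Set G} (h : Y ⊆ Z) (n : ℕ) :
    genProb G Y n ≤ genProb G Z n := by
  rw [genProb, genProb, div_le_div_iff_of_pos_right (card_pow_pos n)]
  exact_mod_cast count_mono h n

private lemma genProb_strict (g : G) {M : Subgroup G} (hM : IsCoatom M) (hg : g ∉ M) :
    genProb G ∅ (Nat.card G) < genProb G {g} (Nat.card G) := by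
  classical
  set n := Nat.card G with hn
  have hle : Nat.card M ≤ n := Nat.card_le_card_of_injective _ Subtype.val_injective
  set e := Finite.equivFin M with he
  set v0 : Fin n → G :=
    fun i => if h : (i : ℕ) < Nat.card M then ((e.symm ⟨i, h⟩ : M) : G) else 1 with hv0
  have hrange : Subgroup.closure (Set.range v0) = M := by
    apply le_antisymm
    · rw [Subgroup.closure_le]
      rintro x ⟨i, rfl⟩
      by_cases h : (i : ℕ) < Nat.card M
      · simp only [hv0, dif_pos h]; exact (e.symm ⟨i, h⟩).2
      · simp only [hv0, dif_neg h]; exact M.one_mem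
    · intro m hm
      apply Subgroup.subset_closure
      refine ⟨⟨(e ⟨m, hm⟩ : Fin (Nat.card M)), lt_of_lt_of_le (e ⟨m, hm⟩).2 hle⟩, ?_⟩
      have h : ((⟨((e ⟨m, hm⟩ : Fin (Nat.card M)) : ℕ),
          lt_of_lt_of_le (e ⟨m, hm⟩).2 hle⟩ : Fin n) : ℕ) < Nat.card M := (e ⟨m, hm⟩).2
      simp only [hv0, dif_pos h]
      have heq : (⟨((e ⟨m, hm⟩ : Fin (Nat.card M)) : ℕ), h⟩ : Fin (Nat.card M)) = e ⟨m, hm⟩ :=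
        rfl
      rw [heq, Equiv.symm_apply_apply]
  have h1 : ¬ (Subgroup.closure (∅ ∪ Set.range v0) = ⊤) := by
    rw [Set.empty_union, hrange]; exact hM.1
  have h2 : Subgroup.closure ({g} ∪ Set.range v0) = ⊤ := by
    apply hM.2
    refine lt_of_le_not_ge ?_ ?_
    · rw [← hrange]; exact Subgroup.closure_mono Set.subset_union_right
    · intro hcon
      exact hg (hcon (Subgroup.subset_closure (Set.mem_union_left _ rfl)))
  have hsub : {v : Fin n → G | Subgroup.closure (∅ ∪ Set.range v) = ⊤}
      ⊂ {v : Fin n → G | Subgroup.closure ({g} ∪ Set.range v) = ⊤} := by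
    constructor
    · intro v hv
      rw [Set.mem_setOf_eq] at hv ⊢
      have hmn :=
        Subgroup.closure_mono (Set.union_subset_union_left (Set.range v) (Set.empty_subset {g}))
      rw [hv] at hmn
      exact top_unique hmn
    · intro hcon
      exact h1 (hcon h2)
  have hncard := Set.ncard_lt_ncard hsub (Set.toFinite _)
  have hc1 : Nat.card {v : Fin n → G // Subgroup.closure (∅ ∪ Set.range v) = ⊤}
      = Set.ncard {v : Fin n → G | Subgroup.closure (∅ ∪ Set.range v) = ⊤} :=
    Nat.card_coe_set_eq _
  have hc2 : Nat.card {v : Fin n → G // Subgroup.closure ({g} ∪ Set.range v) = ⊤}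
      = Set.ncard {v : Fin n → G | Subgroup.closure ({g} ∪ Set.range v) = ⊤} :=
    Nat.card_coe_set_eq _
  rw [genProb, genProb, div_lt_div_iff_of_pos_right (card_pow_pos n)]
  have hlt : Nat.card {v : Fin n → G // Subgroup.closure (∅ ∪ Set.range v) = ⊤}
      < Nat.card {v : Fin n → G // Subgroup.closure ({g} ∪ Set.range v) = ⊤} := by
    rw [hc1, hc2]; exact hncard
  exact_mod_cast hlt

end Aux

theorem stmt2 (G : Type*) [Group G] [Finite G] [Nontrivial G] (g : G) :
    eTime G {g} ≤ eTime G ∅ ∧ (eTime G {g} = eTime G ∅ ↔ g ∈ frattiniSub G) := by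
  have hmono : ∀ n, 1 - genProb G {g} n ≤ 1 - genProb G ∅ n := fun n => by
    have := genProb_mono (G := G) (Set.empty_subset {g}) n
    linarith
  have hsum0 := summable_one_sub (G := G) (∅ : Set G)
  have hsum1 := summable_one_sub (G := G) ({g} : Set G)
  have hfrat : g ∈ frattiniSub G ↔ ∀ M : Subgroup G, IsCoatom M → g ∈ M := by
    simp [frattiniSub, Subgroup.mem_iInf]
  refine ⟨Summable.tsum_le_tsum hmono hsum1 hsum0, ?_, ?_⟩
  · intro heq
    rw [hfrat]
    by_contra hcon
    push_neg at hcon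
    obtain ⟨M, hM, hgM⟩ := hcon
    have hstrict := genProb_strict g hM hgM
    have hlt : eTime G {g} < eTime G ∅ :=
      Summable.tsum_lt_tsum_of_nonneg (fun b => by linarith [genProb_le_one (G := G) ({g} : Set G) b])
        hmono (by linarith) hsum0
    exact hlt.ne heq
  · intro hgf
    rw [hfrat] at hgf
    have key : ∀ n, genProb G ({g} : Set G) n = genProb G (∅ : Set G) n := by
      intro n
      rw [genProb, genProb]
      congr 2
      apply Nat.card_congr
      apply Equiv.subtypeEquivRight
      intro v
      constructor
      · intro hv
        by_contra hne
        obtain ⟨M, hM, hle⟩ := (eq_top_or_exists_le_coatom _).resolve_left hne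
        have hss : ({g} ∪ Set.range v : Set G) ⊆ M := by
          apply Set.union_subset
          · exact Set.singleton_subset_iff.2 (hgf M hM)
          · exact fun x hx => hle (Subgroup.subset_closure (Set.mem_union_right _ hx))
        have hle2 := (Subgroup.closure_le M).2 hss
        rw [hv] at hle2
        exact hM.1 (top_unique hle2)
      · intro hv
        have hmn :=
          Subgroup.closure_mono (Set.union_subset_union_left (Set.range v) (Set.empty_subset {g}))
        rw [hv] at hmn
        exact top_unique hmn
    rw [eTime, eTime]
    exact tsum_congr fun n => by rw [key]
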